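/- Let t₁, t₂, t₃ > 0 and let (x₁,x₂,x₃,h) ∈ ℝ⁴ with h ≠ 0 satisfy the Young–Dupré equations t₁(h²−x₁²)/(h²+x₁²) + t₂(h²−x₂²)/(h²+x₂²) + t₃(h²−x₃²)/(h²+x₃²) = 0 and t₁x₁/(h²+x₁²) + t₂x₂/(h²+x₂²) + t₃x₃/(h²+x₃²) = 0. Define α_k = 2·arctan(x_k/|h|) for k = 1,2,3 and φ_k = α_{k+1} − α_{k−1} with indices taken mod 3. Then the law of cosines holds: cos φ_k = −(t_{k+1}² + t_{k−1}² − t_k²)/(2 t_{k+1} t_{k−1}) for each k ∈ {1,2,3}. -/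

import Mathlib

lemma cos2arctan (x h : ℝ) (hh : h ≠ 0) :
    Real.cos (2 * Real.arctan (x / |h|)) = (h ^ 2 - x ^ 2) / (h ^ 2 + x ^ 2) := by
  have hab : |h| ≠ 0 := abs_ne_zero.mpr hh
  have h2 : (0:ℝ) < h ^ 2 + x ^ 2 := by positivity
  rw [Real.cos_two_mul, Real.cos_arctan]
  rw [div_pow, one_pow, Real.sq_sqrt (by positivity : (0:ℝ) ≤ 1 + (x / |h|) ^ 2)]
  field_simp
  nlinarith [sq_abs h]

lemma sin2arctan (x h : ℝ) (hh : h ≠ 0) :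
    Real.sin (2 * Real.arctan (x / |h|)) = 2 * x * |h| / (h ^ 2 + x ^ 2) := by
  have hab : |h| ≠ 0 := abs_ne_zero.mpr hh
  have h2 : (0:ℝ) < h ^ 2 + x ^ 2 := by positivity
  set u := x / |h| with hu
  have hupos : (0:ℝ) < 1 + u ^ 2 := by positivity
  have hs0 : (0:ℝ) < Real.sqrt (1 + u ^ 2) := Real.sqrt_pos.mpr hupos
  have hs2 : Real.sqrt (1 + u ^ 2) ^ 2 = 1 + u ^ 2 := Real.sq_sqrt hupos.le
  rw [Real.sin_two_mul, Real.sin_arctan, Real.cos_arctan]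
  have e1 : 2 * (u / Real.sqrt (1 + u ^ 2)) * (1 / Real.sqrt (1 + u ^ 2))
      = 2 * u / Real.sqrt (1 + u ^ 2) ^ 2 := by ring
  rw [e1, hs2, hu]
  field_simp
  linear_combination (-x) * (sq_abs h)

lemma key (t₁ t₂ t₃ c₁ s₁ c₂ s₂ c₃ s₃ : ℝ)
    (ht₂ : 0 < t₂) (ht₃ : 0 < t₃)
    (h1 : c₁ ^ 2 + s₁ ^ 2 = 1)
    (hc : t₁ * c₁ + t₂ * c₂ + t₃ * c₃ = 0)
    (hs : t₁ * s₁ + t₂ * s₂ + t₃ * s₃ = 0)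
    (h2 : c₂ ^ 2 + s₂ ^ 2 = 1) (h3 : c₃ ^ 2 + s₃ ^ 2 = 1) :
    c₂ * c₃ + s₂ * s₃ = -((t₂ ^ 2 + t₃ ^ 2 - t₁ ^ 2) / (2 * t₂ * t₃)) := by
  have h23 : (2 * t₂ * t₃) ≠ 0 := by positivity
  have e : (t₂ * c₂ + t₃ * c₃) ^ 2 + (t₂ * s₂ + t₃ * s₃) ^ 2 = t₁ ^ 2 := by
    have e1 : t₂ * c₂ + t₃ * c₃ = -(t₁ * c₁) := by linarith
    have e2 : t₂ * s₂ + t₃ * s₃ = -(t₁ * s₁) := by linarith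
    rw [e1, e2]
    linear_combination t₁ ^ 2 * h1
  rw [← neg_div, eq_div_iff h23]
  linear_combination e - t₂ ^ 2 * h2 - t₃ ^ 2 * h3

/-- At a point with `h ≠ 0` satisfying the Young–Dupré equations, with
`α_k = 2 arctan(x_k/|h|)` and `φ_k = α_{k+1} − α_{k−1}` (indices mod 3),
the law of cosines holds for each `k ∈ {1,2,3}`. -/
theorem stmt_9 (t₁ t₂ t₃ : ℝ) (ht₁ : 0 < t₁) (ht₂ : 0 < t₂) (ht₃ : 0 < t₃)
    (x₁ x₂ x₃ h : ℝ) (hh : h ≠ 0)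
    (hcos : t₁ * (h ^ 2 - x₁ ^ 2) / (h ^ 2 + x₁ ^ 2) + t₂ * (h ^ 2 - x₂ ^ 2) / (h ^ 2 + x₂ ^ 2) +
      t₃ * (h ^ 2 - x₃ ^ 2) / (h ^ 2 + x₃ ^ 2) = 0)
    (hsin : t₁ * x₁ / (h ^ 2 + x₁ ^ 2) + t₂ * x₂ / (h ^ 2 + x₂ ^ 2) +
      t₃ * x₃ / (h ^ 2 + x₃ ^ 2) = 0)
    (α₁ α₂ α₃ φ₁ φ₂ φ₃ : ℝ)
    (hα₁ : α₁ = 2 * Real.arctan (x₁ / |h|))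
    (hα₂ : α₂ = 2 * Real.arctan (x₂ / |h|))
    (hα₃ : α₃ = 2 * Real.arctan (x₃ / |h|))
    (hφ₁ : φ₁ = α₂ - α₃) (hφ₂ : φ₂ = α₃ - α₁) (hφ₃ : φ₃ = α₁ - α₂) :
    Real.cos φ₁ = -((t₂ ^ 2 + t₃ ^ 2 - t₁ ^ 2) / (2 * t₂ * t₃)) ∧
    Real.cos φ₂ = -((t₃ ^ 2 + t₁ ^ 2 - t₂ ^ 2) / (2 * t₃ * t₁)) ∧
    Real.cos φ₃ = -((t₁ ^ 2 + t₂ ^ 2 - t₃ ^ 2) / (2 * t₁ * t₂)) := by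
  have hc₁ : Real.cos α₁ = (h ^ 2 - x₁ ^ 2) / (h ^ 2 + x₁ ^ 2) := by rw [hα₁, cos2arctan _ _ hh]
  have hc₂ : Real.cos α₂ = (h ^ 2 - x₂ ^ 2) / (h ^ 2 + x₂ ^ 2) := by rw [hα₂, cos2arctan _ _ hh]
  have hc₃ : Real.cos α₃ = (h ^ 2 - x₃ ^ 2) / (h ^ 2 + x₃ ^ 2) := by rw [hα₃, cos2arctan _ _ hh]
  have hs₁ : Real.sin α₁ = 2 * x₁ * |h| / (h ^ 2 + x₁ ^ 2) := by rw [hα₁, sin2arctan _ _ hh]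
  have hs₂ : Real.sin α₂ = 2 * x₂ * |h| / (h ^ 2 + x₂ ^ 2) := by rw [hα₂, sin2arctan _ _ hh]
  have hs₃ : Real.sin α₃ = 2 * x₃ * |h| / (h ^ 2 + x₃ ^ 2) := by rw [hα₃, sin2arctan _ _ hh]
  have hc : t₁ * Real.cos α₁ + t₂ * Real.cos α₂ + t₃ * Real.cos α₃ = 0 := by
    rw [hc₁, hc₂, hc₃, ← hcos]; ring
  have hs : t₁ * Real.sin α₁ + t₂ * Real.sin α₂ + t₃ * Real.sin α₃ = 0 := by
    rw [hs₁, hs₂, hs₃]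
    calc t₁ * (2 * x₁ * |h| / (h ^ 2 + x₁ ^ 2)) + t₂ * (2 * x₂ * |h| / (h ^ 2 + x₂ ^ 2)) +
        t₃ * (2 * x₃ * |h| / (h ^ 2 + x₃ ^ 2))
        = 2 * |h| * (t₁ * x₁ / (h ^ 2 + x₁ ^ 2) + t₂ * x₂ / (h ^ 2 + x₂ ^ 2) +
          t₃ * x₃ / (h ^ 2 + x₃ ^ 2)) := by ring
      _ = 0 := by rw [hsin]; ring
  have p1 := Real.sin_sq_add_cos_sq α₁
  have p2 := Real.sin_sq_add_cos_sq α₂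
  have p3 := Real.sin_sq_add_cos_sq α₃
  refine ⟨?_, ?_, ?_⟩
  · rw [hφ₁, Real.cos_sub]
    exact key t₁ t₂ t₃ (Real.cos α₁) (Real.sin α₁) (Real.cos α₂) (Real.sin α₂)
      (Real.cos α₃) (Real.sin α₃) ht₂ ht₃ (by linarith) hc hs (by linarith) (by linarith)
  · rw [hφ₂, Real.cos_sub]
    exact key t₂ t₃ t₁ (Real.cos α₂) (Real.sin α₂) (Real.cos α₃) (Real.sin α₃)
      (Real.cos α₁) (Real.sin α₁) ht₃ ht₁ (by linarith) (by linarith) (by linarith)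
      (by linarith) (by linarith)
  · rw [hφ₃, Real.cos_sub]
    exact key t₃ t₁ t₂ (Real.cos α₃) (Real.sin α₃) (Real.cos α₁) (Real.sin α₁)
      (Real.cos α₂) (Real.sin α₂) ht₁ ht₂ (by linarith) (by linarith) (by linarith)
      (by linarith) (by linarith)
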